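/- Let p be a prime, and let F be a family of functions F_p^n → F_p that is linear, affine-invariant, and monomially closed. Suppose the monomial function x^e lies in F for some e ∈ {0,…,p−1}^n. Then for every e' ∈ {0,…,p−1}^n with |e'|₁ ≤ |e|₁, the monomial function x^{e'} also lies in F. -/

import Mathlib

/-- `a ≤_p b`: every base-`p` digit of `a` is at most the corresponding base-`p` digit of `b`. -/
def digitLE (p a b : ℕ) : Prop := ∀ i : ℕ, a / p ^ i % p ≤ b / p ^ i % p

/-- The monomial function `x^e : F^n → F`, `α ↦ ∏ i, α i ^ e i` (with `0^0 = 1`). -/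
def monFn {F : Type} [Field F] {n : ℕ} (e : Fin n → ℕ) : (Fin n → F) → F :=
  fun α => ∏ i, α i ^ e i

/-- `T : F^n → F^k` is an affine map if `T x = M x + b` for a matrix `M` and vector `b`. -/
def IsAffineMap {F : Type} [Field F] {n k : ℕ} (T : (Fin n → F) → (Fin k → F)) : Prop :=
  ∃ (M : Matrix (Fin k) (Fin n) F) (b : Fin k → F), ∀ x, T x = M.mulVec x + b

/-- A family of functions is linear if it contains `0` and is closed under `F`-linear
combinations. -/
def LinearFamily {F : Type} [Field F] {n : ℕ} (𝓕 : Set ((Fin n → F) → F)) : Prop :=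
  (fun _ => (0 : F)) ∈ 𝓕 ∧
    ∀ (a b : F) (f g : (Fin n → F) → F), f ∈ 𝓕 → g ∈ 𝓕 →
      (fun x => a * f x + b * g x) ∈ 𝓕

/-- A family of functions is affine-invariant if it is closed under composition with
affine maps `F^n → F^n`. -/
def AffineInvariant {F : Type} [Field F] {n : ℕ} (𝓕 : Set ((Fin n → F) → F)) : Prop :=
  ∀ f ∈ 𝓕, ∀ T : (Fin n → F) → (Fin n → F), IsAffineMap T → (f ∘ T) ∈ 𝓕

/-- `P` is the reduced polynomial of `f`: all individual degrees are at most `q - 1`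
and `P` computes `f`.  The parameter `q` is the field size. -/
def IsReducedPolyOf (q : ℕ) {F : Type} [Field F] {n : ℕ} (P : MvPolynomial (Fin n) F)
    (f : (Fin n → F) → F) : Prop :=
  (∀ i, P.degreeOf i ≤ q - 1) ∧ ∀ x, MvPolynomial.eval x P = f x

/-- A family is monomially closed if every monomial appearing in (the reduced polynomial of)
a member lies in the family as a monomial function. -/
def MonomiallyClosed (q : ℕ) {F : Type} [Field F] {n : ℕ} (𝓕 : Set ((Fin n → F) → F)) : Prop :=
  ∀ f ∈ 𝓕, ∀ P : MvPolynomial (Fin n) F, IsReducedPolyOf q P f →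
    ∀ e : Fin n →₀ ℕ, P.coeff e ≠ 0 → monFn (fun i => e i) ∈ 𝓕



open MvPolynomial Finset

namespace PrimeShadowAux

variable {p n : ℕ} [Fact p.Prime]

lemma choose_ne_zero {m k : ℕ} (hm : m ≤ p - 1) (hk : k ≤ m) :
    ((m.choose k : ℕ) : ZMod p) ≠ 0 := by
  have hp : p.Prime := Fact.out
  have h2 := hp.two_le
  rw [Ne, ZMod.natCast_eq_zero_iff]
  intro hdvd
  have h1 : p ∣ m.factorial := by
    rw [← Nat.choose_mul_factorial_mul_factorial hk]
    exact (hdvd.mul_right _).mul_right _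
  have := (hp.dvd_factorial).mp h1
  omega

lemma pow_red (x : ZMod p) {t : ℕ} (ht : p ≤ t) : x ^ (t - (p - 1)) = x ^ t := by
  have h2 := (Fact.out : p.Prime).two_le
  rcases eq_or_ne x 0 with rfl | hx
  · rw [zero_pow (by omega), zero_pow (by omega)]
  · have h1 : x ^ (p - 1) = 1 := ZMod.pow_card_sub_one_eq_one hx
    calc x ^ (t - (p - 1)) = x ^ (t - (p - 1)) * x ^ (p - 1) := by rw [h1, mul_one]
    _ = x ^ (t - (p - 1) + (p - 1)) := (pow_add _ _ _).symm
    _ = x ^ t := by congr 1; omega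

/-- reduced exponent -/
def redE (p t : ℕ) : ℕ := if t ≤ p - 1 then t else t - (p - 1)

lemma pow_redE (x : ZMod p) (t : ℕ) : x ^ redE p t = x ^ t := by
  unfold redE
  split
  · rfl
  · have h2 := (Fact.out : p.Prime).two_le
    exact pow_red x (by omega)

lemma redE_le {t : ℕ} (ht : t ≤ 2 * (p - 1)) : redE p t ≤ p - 1 := by
  unfold redE; split <;> omega

lemma coeff_sum_ne_zero {N : ℕ} (E : ℕ → (Fin n →₀ ℕ)) (c : ℕ → ZMod p) (d : Fin n →₀ ℕ)
    (h : MvPolynomial.coeff d (∑ m ∈ Finset.range N, MvPolynomial.monomial (E m) (c m)) ≠ 0) :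
    ∃ m < N, E m = d := by
  by_contra hc
  push_neg at hc
  apply h
  rw [MvPolynomial.coeff_sum]
  refine Finset.sum_eq_zero fun m hm => ?_
  rw [MvPolynomial.coeff_monomial, if_neg (hc m (Finset.mem_range.mp hm))]

lemma coeff_sum_eq {N : ℕ} (E : ℕ → (Fin n →₀ ℕ)) (c : ℕ → ZMod p)
    (hE : ∀ m₁ < N, ∀ m₂ < N, E m₁ = E m₂ → m₁ = m₂) {k : ℕ} (hk : k < N) :
    MvPolynomial.coeff (E k) (∑ m ∈ Finset.range N, MvPolynomial.monomial (E m) (c m)) = c k := by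
  rw [MvPolynomial.coeff_sum, Finset.sum_eq_single k]
  · rw [MvPolynomial.coeff_monomial, if_pos rfl]
  · intro m hm hne
    rw [MvPolynomial.coeff_monomial, if_neg]
    exact fun hEq => hne (hE m (Finset.mem_range.mp hm) k hk hEq)
  · intro h; exact absurd (Finset.mem_range.mpr hk) h

lemma degreeOf_sum_le {N : ℕ} (E : ℕ → (Fin n →₀ ℕ)) (c : ℕ → ZMod p)
    (hb : ∀ m < N, ∀ i, E m i ≤ p - 1) (i : Fin n) :
    MvPolynomial.degreeOf i (∑ m ∈ Finset.range N, MvPolynomial.monomial (E m) (c m)) ≤ p - 1 := by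
  rw [MvPolynomial.degreeOf_le_iff]
  intro d hd
  rw [MvPolynomial.mem_support_iff] at hd
  obtain ⟨m, hm, rfl⟩ := coeff_sum_ne_zero E c d hd
  exact hb m hm i

lemma eval_sum_monomial {N : ℕ} (E : ℕ → (Fin n → ℕ)) (c : ℕ → ZMod p) (x : Fin n → ZMod p) :
    MvPolynomial.eval x (∑ m ∈ Finset.range N,
        MvPolynomial.monomial (Finsupp.equivFunOnFinite.symm (E m)) (c m))
      = ∑ m ∈ Finset.range N, c m * ∏ i, x i ^ E m i := by
  rw [map_sum]
  refine Finset.sum_congr rfl fun m _ => ?_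
  rw [MvPolynomial.eval_monomial, Finsupp.prod_fintype]
  · rfl
  · intro i; exact pow_zero _

lemma prod_split {M : Type*} [CommMonoid M] (f : Fin n → M) {i j : Fin n} (hij : i ≠ j) :
    ∏ l, f l = f i * f j * ∏ l ∈ (Finset.univ.erase i).erase j, f l := by
  rw [← Finset.mul_prod_erase _ f (Finset.mem_univ i),
      ← Finset.mul_prod_erase _ f (Finset.mem_erase.mpr ⟨hij.symm, Finset.mem_univ j⟩), mul_assoc]

lemma sum_split (f : Fin n → ℕ) {i j : Fin n} (hij : i ≠ j) :
    ∑ l, f l = f i + f j + ∑ l ∈ (Finset.univ.erase i).erase j, f l := by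
  rw [← Finset.add_sum_erase _ f (Finset.mem_univ i),
      ← Finset.add_sum_erase _ f (Finset.mem_erase.mpr ⟨hij.symm, Finset.mem_univ j⟩), add_assoc]

end PrimeShadowAux


lemma step_dec {p n : ℕ} [Fact p.Prime] (𝓕 : Set ((Fin n → ZMod p) → ZMod p))
    (haff : AffineInvariant 𝓕) (hmon : MonomiallyClosed p 𝓕)
    (e : Fin n → ℕ) (he : ∀ i, e i ≤ p - 1) (hmem : monFn e ∈ 𝓕)
    (i : Fin n) (k : ℕ) (hk : k ≤ e i) :
    monFn (Function.update e i k) ∈ 𝓕 := by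
  classical
  set b : Fin n → ZMod p := fun l => if l = i then 1 else 0 with hb
  set T : (Fin n → ZMod p) → (Fin n → ZMod p) := fun x => x + b with hT
  have hTaff : IsAffineMap T := ⟨1, b, fun x => by rw [Matrix.one_mulVec]⟩
  have hg : (monFn e ∘ T) ∈ 𝓕 := haff _ hmem T hTaff
  set E : ℕ → Fin n → ℕ := fun m => Function.update e i m with hE
  set P : MvPolynomial (Fin n) (ZMod p) :=
    ∑ m ∈ Finset.range (e i + 1),
      MvPolynomial.monomial (Finsupp.equivFunOnFinite.symm (E m)) (((e i).choose m : ZMod p))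
    with hP
  have hEinj : ∀ m₁ < e i + 1, ∀ m₂ < e i + 1,
      Finsupp.equivFunOnFinite.symm (E m₁) = Finsupp.equivFunOnFinite.symm (E m₂) → m₁ = m₂ := by
    intro m₁ _ m₂ _ h
    have h2 : E m₁ = E m₂ := Finsupp.equivFunOnFinite.symm.injective h
    have := congrFun h2 i
    simpa [hE] using this
  have hred : IsReducedPolyOf p P (monFn e ∘ T) := by
    constructor
    · intro l
      refine PrimeShadowAux.degreeOf_sum_le _ _ ?_ l
      intro m hm l'
      simp only [Finsupp.coe_equivFunOnFinite_symm]
      by_cases hl : l' = i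
      · have h3 := he i
        subst hl
        simp only [hE, Function.update_self]
        omega
      · simp only [hE, Function.update_of_ne hl]; exact he l'
    · intro x
      rw [hP, PrimeShadowAux.eval_sum_monomial]
      have hRHS : (monFn e ∘ T) x
          = (x i + 1) ^ e i * ∏ l ∈ Finset.univ.erase i, x l ^ e l := by
        show ∏ l, (x l + b l) ^ e l = _
        rw [← Finset.mul_prod_erase Finset.univ _ (Finset.mem_univ i)]
        congr 1
        · simp [hb]
        · refine Finset.prod_congr rfl fun l hl => ?_
          rw [hb]; simp [Finset.ne_of_mem_erase hl]
      rw [hRHS, add_pow, Finset.sum_mul]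
      refine Finset.sum_congr rfl fun m hm => ?_
      rw [← Finset.mul_prod_erase Finset.univ _ (Finset.mem_univ i)]
      have h1 : x i ^ E m i = x i ^ m := by
        simp [hE]
      have h2 : ∏ l ∈ Finset.univ.erase i, x l ^ E m l = ∏ l ∈ Finset.univ.erase i, x l ^ e l :=
        Finset.prod_congr rfl fun l hl => by
          rw [hE]; simp [Function.update_of_ne (Finset.ne_of_mem_erase hl)]
      rw [h1, h2, one_pow]
      ring
  have hco : MvPolynomial.coeff (Finsupp.equivFunOnFinite.symm (E k)) P ≠ 0 := by
    rw [hP, PrimeShadowAux.coeff_sum_eq _ _ hEinj (by omega)]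
    exact PrimeShadowAux.choose_ne_zero (he i) hk
  have := hmon _ hg P hred _ hco
  exact this


lemma step_transfer {p n : ℕ} [Fact p.Prime] (𝓕 : Set ((Fin n → ZMod p) → ZMod p))
    (haff : AffineInvariant 𝓕) (hmon : MonomiallyClosed p 𝓕)
    (e : Fin n → ℕ) (he : ∀ i, e i ≤ p - 1) (hmem : monFn e ∈ 𝓕)
    (i j : Fin n) (hij : i ≠ j) (k : ℕ) (hk : k ≤ e j) (hik : e i + k ≤ p - 1) :
    monFn (fun l => if l = i then e i + k else if l = j then e j - k else e l) ∈ 𝓕 := by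
  classical
  have h2 := (Fact.out : p.Prime).two_le
  set T : (Fin n → ZMod p) → (Fin n → ZMod p) :=
    fun x l => x l + if l = j then x i else 0 with hT
  have hTaff : IsAffineMap T := by
    refine ⟨1 + Matrix.single j i 1, 0, fun x => ?_⟩
    funext r
    rw [Pi.add_apply, Pi.zero_apply, add_zero, Matrix.add_mulVec, Matrix.one_mulVec,
      Pi.add_apply]
    show x r + (if r = j then x i else 0) = _
    congr 1
    by_cases hr : r = j
    · subst hr
      simp [Matrix.mulVec, dotProduct, Matrix.single, ite_and]
    · simp [Matrix.mulVec, dotProduct, Matrix.single, ite_and, Ne.symm hr, hr]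
  have hg : (monFn e ∘ T) ∈ 𝓕 := haff _ hmem T hTaff
  set E : ℕ → Fin n → ℕ := fun m l =>
    if l = i then PrimeShadowAux.redE p (e i + m) else if l = j then e j - m else e l with hE
  set P : MvPolynomial (Fin n) (ZMod p) :=
    ∑ m ∈ Finset.range (e j + 1),
      MvPolynomial.monomial (Finsupp.equivFunOnFinite.symm (E m)) (((e j).choose m : ZMod p))
    with hP
  have hEinj : ∀ m₁ < e j + 1, ∀ m₂ < e j + 1,
      Finsupp.equivFunOnFinite.symm (E m₁) = Finsupp.equivFunOnFinite.symm (E m₂) → m₁ = m₂ := by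
    intro m₁ hm₁ m₂ hm₂ h
    have h2' : E m₁ = E m₂ := Finsupp.equivFunOnFinite.symm.injective h
    have := congrFun h2' j
    have hji : j ≠ i := Ne.symm hij
    simp [hE, hji] at this
    omega
  have hred : IsReducedPolyOf p P (monFn e ∘ T) := by
    constructor
    · intro l
      refine PrimeShadowAux.degreeOf_sum_le _ _ ?_ l
      intro m hm l'
      simp only [Finsupp.coe_equivFunOnFinite_symm, hE]
      have h3 := he i; have h4 := he j; have h5 := he l'
      split
      · exact PrimeShadowAux.redE_le (by omega)
      · split <;> omega
    · intro x
      rw [hP, PrimeShadowAux.eval_sum_monomial]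
      set R : ZMod p := ∏ l ∈ (Finset.univ.erase i).erase j, x l ^ e l with hR
      have hRHS : (monFn e ∘ T) x = x i ^ e i * (x j + x i) ^ e j * R := by
        show ∏ l, (x l + if l = j then x i else 0) ^ e l = _
        rw [PrimeShadowAux.prod_split (fun l => (x l + if l = j then x i else 0) ^ e l) hij]
        have e1 : (x i + if i = j then x i else 0) ^ e i = x i ^ e i := by simp [hij]
        have e2 : (x j + if j = j then x i else 0) ^ e j = (x j + x i) ^ e j := by simp
        have e3 : ∏ l ∈ (Finset.univ.erase i).erase j, (x l + if l = j then x i else 0) ^ e l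
            = R := by
          rw [hR]
          refine Finset.prod_congr rfl fun l hl => ?_
          simp [Finset.ne_of_mem_erase hl]
        rw [e1, e2, e3]
      rw [hRHS, add_comm (x j) (x i), add_pow, Finset.mul_sum, Finset.sum_mul]
      refine Finset.sum_congr rfl fun m hm => ?_
      rw [PrimeShadowAux.prod_split (fun l => x l ^ E m l) hij]
      have h1 : x i ^ E m i = x i ^ (e i + m) := by
        simp only [hE, if_pos rfl]
        exact PrimeShadowAux.pow_redE _ _
      have h2' : x j ^ E m j = x j ^ (e j - m) := by
        have hji : j ≠ i := Ne.symm hij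
        simp [hE, hji]
      have h3 : ∏ l ∈ (Finset.univ.erase i).erase j, x l ^ E m l = R := by
        rw [hR]
        refine Finset.prod_congr rfl fun l hl => ?_
        have hlj : l ≠ j := Finset.ne_of_mem_erase hl
        have hli : l ≠ i := Finset.ne_of_mem_erase (Finset.mem_of_mem_erase hl)
        simp [hE, hli, hlj]
      rw [h1, h2', h3, pow_add]
      ring
  have hco : MvPolynomial.coeff (Finsupp.equivFunOnFinite.symm (E k)) P ≠ 0 := by
    rw [hP, PrimeShadowAux.coeff_sum_eq _ _ hEinj (by omega)]
    exact PrimeShadowAux.choose_ne_zero (he j) hk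
  have hres := hmon _ hg P hred _ hco
  have hEk : E k = fun l => if l = i then e i + k else if l = j then e j - k else e l := by
    funext l
    simp only [hE]
    by_cases hl : l = i
    · subst hl
      rw [if_pos rfl, if_pos rfl]
      unfold PrimeShadowAux.redE
      rw [if_pos hik]
    · rw [if_neg hl, if_neg hl]
  rw [← hEk]
  exact hres


lemma phaseA {p n : ℕ} [Fact p.Prime] (𝓕 : Set ((Fin n → ZMod p) → ZMod p))
    (haff : AffineInvariant 𝓕) (hmon : MonomiallyClosed p 𝓕) :
    ∀ (d : ℕ) (e : Fin n → ℕ), (∀ i, e i ≤ p - 1) → monFn e ∈ 𝓕 → d ≤ ∑ i, e i →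
    ∃ f : Fin n → ℕ, (∀ i, f i ≤ e i) ∧ ∑ i, f i = (∑ i, e i) - d ∧ monFn f ∈ 𝓕 := by
  intro d
  induction d with
  | zero => intro e he hmem _; exact ⟨e, fun i => le_rfl, by omega, hmem⟩
  | succ d ih =>
    intro e he hmem hd
    obtain ⟨f, hf1, hf2, hf3⟩ := ih e he hmem (by omega)
    have hpos : ∃ i, 0 < f i := by
      by_contra hc
      push_neg at hc
      have : ∑ i, f i = 0 := Finset.sum_eq_zero fun i _ => by have := hc i; omega
      omega
    obtain ⟨i, hi⟩ := hpos
    refine ⟨Function.update f i (f i - 1), ?_, ?_, ?_⟩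
    · intro l
      by_cases hl : l = i
      · subst hl; rw [Function.update_self]; have := hf1 l; omega
      · rw [Function.update_of_ne hl]; exact hf1 l
    · have h1 := Finset.add_sum_erase Finset.univ f (Finset.mem_univ i)
      have h2 := Finset.add_sum_erase Finset.univ (Function.update f i (f i - 1))
        (Finset.mem_univ i)
      have h3 : ∑ l ∈ Finset.univ.erase i, Function.update f i (f i - 1) l
          = ∑ l ∈ Finset.univ.erase i, f l :=
        Finset.sum_congr rfl fun l hl => Function.update_of_ne (Finset.ne_of_mem_erase hl) _ _
      rw [Function.update_self] at h2
      omega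
    · exact step_dec 𝓕 haff hmon f (fun l => le_trans (hf1 l) (he l)) hf3 i (f i - 1)
        (by omega)

lemma phaseB {p n : ℕ} [Fact p.Prime] (𝓕 : Set ((Fin n → ZMod p) → ZMod p))
    (haff : AffineInvariant 𝓕) (hmon : MonomiallyClosed p 𝓕) :
    ∀ (D : ℕ) (e f : Fin n → ℕ), (∀ i, e i ≤ p - 1) → (∀ i, f i ≤ p - 1) →
      (∑ i, e i) = (∑ i, f i) → (∑ i, ((e i - f i) + (f i - e i))) ≤ D →
      monFn e ∈ 𝓕 → monFn f ∈ 𝓕 := by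
  intro D
  induction D with
  | zero =>
    intro e f he hf hsum hdist hmem
    have h0 : ∑ i, ((e i - f i) + (f i - e i)) = 0 := Nat.le_zero.mp hdist
    have : e = f := by
      funext l
      have := (Finset.sum_eq_zero_iff.mp h0) l (Finset.mem_univ l)
      omega
    exact this ▸ hmem
  | succ D ih =>
    intro e f he hf hsum hdist hmem
    by_cases heq : e = f
    · exact heq ▸ hmem
    · have hne : ∃ l, e l ≠ f l := by
        by_contra hc; push_neg at hc; exact heq (funext hc)
      obtain ⟨l₀, hl₀⟩ := hne
      have hexi : ∃ i, f i < e i := by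
        by_contra hc; push_neg at hc
        have : ∑ i, e i < ∑ i, f i :=
          Finset.sum_lt_sum (fun i _ => hc i) ⟨l₀, Finset.mem_univ l₀, by have := hc l₀; omega⟩
        omega
      have hexj : ∃ j, e j < f j := by
        by_contra hc; push_neg at hc
        have : ∑ i, f i < ∑ i, e i :=
          Finset.sum_lt_sum (fun i _ => hc i) ⟨l₀, Finset.mem_univ l₀, by have := hc l₀; omega⟩
        omega
      obtain ⟨i, hi⟩ := hexi
      obtain ⟨j, hj⟩ := hexj
      have hij : i ≠ j := by intro h; subst h; omega
      set g : Fin n → ℕ := fun l => if l = j then e j + 1 else if l = i then e i - 1 else e l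
        with hgdef
      have hg𝓕 : monFn g ∈ 𝓕 :=
        step_transfer 𝓕 haff hmon e he hmem j i (Ne.symm hij) 1 (by omega)
          (by have := hf j; omega)
      have hgi : g i = e i - 1 := by simp [hgdef, hij]
      have hgj : g j = e j + 1 := by simp [hgdef]
      have hgrest : ∀ l, l ≠ i → l ≠ j → g l = e l := by
        intro l hli hlj; simp [hgdef, hli, hlj]
      have hboxg : ∀ l, g l ≤ p - 1 := by
        intro l
        by_cases hlj : l = j
        · rw [hlj, hgj]; have := hf j; omega
        · by_cases hli : l = i
          · rw [hli, hgi]; have := he i; omega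
          · rw [hgrest l hli hlj]; exact he l
      have hs1 := PrimeShadowAux.sum_split g hij
      have hs2 := PrimeShadowAux.sum_split e hij
      have hrest : ∑ l ∈ (Finset.univ.erase i).erase j, g l
          = ∑ l ∈ (Finset.univ.erase i).erase j, e l :=
        Finset.sum_congr rfl fun l hl =>
          hgrest l (Finset.ne_of_mem_erase (Finset.mem_of_mem_erase hl))
            (Finset.ne_of_mem_erase hl)
      have hsumg : ∑ l, g l = ∑ l, e l := by omega
      have hd1 : ∑ l, ((g l - f l) + (f l - g l))
          = ((g i - f i) + (f i - g i)) + ((g j - f j) + (f j - g j))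
            + ∑ l ∈ (Finset.univ.erase i).erase j, ((g l - f l) + (f l - g l)) :=
        PrimeShadowAux.sum_split _ hij
      have hd2 : ∑ l, ((e l - f l) + (f l - e l))
          = ((e i - f i) + (f i - e i)) + ((e j - f j) + (f j - e j))
            + ∑ l ∈ (Finset.univ.erase i).erase j, ((e l - f l) + (f l - e l)) :=
        PrimeShadowAux.sum_split _ hij
      have hdrest : ∑ l ∈ (Finset.univ.erase i).erase j, ((g l - f l) + (f l - g l))
          = ∑ l ∈ (Finset.univ.erase i).erase j, ((e l - f l) + (f l - e l)) :=
        Finset.sum_congr rfl fun l hl => by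
          rw [hgrest l (Finset.ne_of_mem_erase (Finset.mem_of_mem_erase hl))
            (Finset.ne_of_mem_erase hl)]
      have hdistg : (∑ l, ((g l - f l) + (f l - g l))) ≤ D := by omega
      exact ih g f hboxg hf (hsumg.trans hsum) hdistg hg𝓕

/-- **Prime-field shadow lemma.**
Over a prime field `F_p`, if `𝓕` is linear, affine-invariant and monomially closed,
`x^e ∈ 𝓕` for some `e ∈ {0,…,p-1}^n`, and `e' ∈ {0,…,p-1}^n` satisfies `|e'|₁ ≤ |e|₁`,
then `x^{e'} ∈ 𝓕`. -/
theorem prime_shadow_closed (p : ℕ) [Fact p.Prime]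
    (n : ℕ) (𝓕 : Set ((Fin n → ZMod p) → ZMod p))
    (hlin : LinearFamily 𝓕) (haff : AffineInvariant 𝓕) (hmon : MonomiallyClosed p 𝓕)
    (e : Fin n → ℕ) (he : ∀ i, e i ≤ p - 1) (hmem : monFn e ∈ 𝓕)
    (e' : Fin n → ℕ) (he' : ∀ i, e' i ≤ p - 1) (hsum : ∑ i, e' i ≤ ∑ i, e i) :
    monFn e' ∈ 𝓕 := by
  obtain ⟨f, hf1, hf2, hf3⟩ :=
    phaseA 𝓕 haff hmon ((∑ i, e i) - ∑ i, e' i) e he hmem (by omega)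
  exact phaseB 𝓕 haff hmon (∑ i, ((f i - e' i) + (e' i - f i))) f e'
    (fun i => le_trans (hf1 i) (he i)) he' (by omega) le_rfl hf3
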